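/- Let f and g be homogeneous polynomials of the same degree n in the variables X_1,…,X_d over ℂ and let U be a d×d unitary matrix. Then the Fischer inner product is invariant under the unitary change of variables: ⟨f∘U, g∘U⟩ = ⟨f, g⟩. -/

import Mathlib

open MvPolynomial

/-- The Fischer (Bombieri–Fock) inner product
`⟨f,g⟩ = Σ_α conj(c_α(f)) · c_α(g) · α!` where `α! = ∏ i (α i)!`;
it is conjugate-linear in the first argument. -/
noncomputable def fischer {d : ℕ} (f g : MvPolynomial (Fin d) ℂ) : ℂ :=
  ∑ α ∈ f.support ∪ g.support,
    (starRingEnd ℂ) (coeff α f) * coeff α g * (α.prod fun _ m => (m.factorial : ℂ))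

/-- The substitution `Xᵢ ↦ Σⱼ U i j • Xⱼ`, i.e. `f ∘ U`. -/
noncomputable def compU {d : ℕ} (U : Matrix (Fin d) (Fin d) ℂ) (f : MvPolynomial (Fin d) ℂ) :
    MvPolynomial (Fin d) ℂ :=
  aeval (fun i => ∑ j, U i j • (X j : MvPolynomial (Fin d) ℂ)) f

noncomputable section FischerProof

variable {d : ℕ}

variable {d : ℕ}

abbrev MvP (d : ℕ) := MvPolynomial (Fin d) ℂ

def pdE (d : ℕ) (i : Fin d) : Module.End ℂ (MvP d) := (pderiv i).toLinearMap

lemma pderiv_pderiv_comm (i j : Fin d) (p : MvP d) :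
    pderiv i (pderiv j p) = pderiv j (pderiv i p) := by
  induction p using MvPolynomial.induction_on' with
  | monomial s a =>
    rcases eq_or_ne i j with rfl | hij
    · rfl
    · simp only [pderiv_monomial]
      rw [Finsupp.tsub_apply, Finsupp.tsub_apply, Finsupp.single_apply,
        Finsupp.single_apply, if_neg hij, if_neg (Ne.symm hij)]
      simp only [Nat.sub_zero]
      congr 1
      · rw [tsub_tsub, tsub_tsub, add_comm]
      · ring
  | add p q hp hq => simp [hp, hq]

def Dhom (d : ℕ) : MvP d →ₐ[ℂ] Module.End ℂ (MvP d) :=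
  letI : CommSemiring (Algebra.adjoin ℂ (Set.range (pdE d))) :=
    Algebra.adjoinCommSemiringOfComm ℂ (by
      rintro a ⟨i, rfl⟩ b ⟨j, rfl⟩
      exact LinearMap.ext fun p => pderiv_pderiv_comm i j p)
  (Algebra.adjoin ℂ (Set.range (pdE d))).val.comp
    (aeval fun i => (⟨pdE d i, Algebra.subset_adjoin (Set.mem_range_self i)⟩ :
      Algebra.adjoin ℂ (Set.range (pdE d))))

@[simp] lemma Dhom_X (i : Fin d) : Dhom d (X i) = pdE d i := by
  simp [Dhom]


lemma descFactorial_succ' (n k : ℕ) :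
    n.descFactorial (k + 1) = n * (n - 1).descFactorial k := by
  cases n with
  | zero => simp
  | succ m => rw [Nat.succ_descFactorial_succ]; simp

lemma pd_pow_monomial (i : Fin d) (k : ℕ) (β : Fin d →₀ ℕ) (b : ℂ) :
    ((pdE d i) ^ k) (monomial β b) =
      monomial (β - Finsupp.single i k) (b * ((β i).descFactorial k : ℂ)) := by
  induction k generalizing β b with
  | zero => simp
  | succ k ih =>
    rw [pow_succ, Module.End.mul_apply]
    have h1 : (pdE d i) (monomial β b) = monomial (β - Finsupp.single i 1) (b * (β i)) := by
      simp [pdE, pderiv_monomial]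
    rw [h1, ih, Finsupp.tsub_apply, Finsupp.single_eq_same]
    congr 1
    · rw [tsub_tsub, ← Finsupp.single_add, add_comm]
    · rw [descFactorial_succ']
      push_cast
      ring

lemma Dhom_single (a : Fin d) (n : ℕ) :
    Dhom d (monomial (Finsupp.single a n) 1) = (pdE d a) ^ n := by
  rw [← X_pow_eq_monomial, map_pow, Dhom_X]

lemma Dhom_monomial_one (α β : Fin d →₀ ℕ) (b : ℂ) :
    Dhom d (monomial α 1) (monomial β b) =
      monomial (β - α) (b * α.prod fun i k => ((β i).descFactorial k : ℂ)) := by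
  induction α using Finsupp.induction generalizing β b with
  | zero => simp
  | single_add a n f ha hn ih =>
    have hm : (monomial (Finsupp.single a n + f) (1 : ℂ))
        = monomial (Finsupp.single a n) 1 * monomial f 1 := by
      rw [monomial_mul, one_mul]
    rw [hm, map_mul, Module.End.mul_apply, ih, Dhom_single, pd_pow_monomial]
    have hdisj : Disjoint (Finsupp.single a n).support f.support := by
      rw [Finsupp.support_single_ne_zero a hn, Finset.disjoint_singleton_left]
      exact ha
    rw [Finsupp.prod_add_index_of_disjoint hdisj]
    have hfa : (β - f) a = β a := by
      rw [Finsupp.tsub_apply, Finsupp.notMem_support_iff.mp ha, Nat.sub_zero]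
    rw [hfa]
    congr 1
    · rw [tsub_tsub, add_comm]
    · rw [Finsupp.prod_single_index (by simp)]
      ring

lemma cc_Dhom_monomial (α β : Fin d →₀ ℕ) (c b : ℂ) :
    constantCoeff (Dhom d (monomial α c) (monomial β b)) =
      if α = β then c * b * (α.prod fun _ m => (m.factorial : ℂ)) else 0 := by
  have h : (monomial α c : MvP d) = c • monomial α 1 := by
    rw [smul_monomial, smul_eq_mul, mul_one]
  have key : Dhom d (monomial α c) (monomial β b)
      = monomial (β - α) (c * (b * α.prod fun i k => ((β i).descFactorial k : ℂ))) := by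
    rw [h, map_smul, LinearMap.smul_apply, Dhom_monomial_one, smul_monomial, smul_eq_mul]
  rw [key, constantCoeff_monomial]
  by_cases hab : α = β
  · subst hab
    rw [if_pos (tsub_self α), if_pos rfl]
    rw [Finsupp.prod_congr (g2 := fun i m => ((m.factorial : ℂ)))
      (fun i _ => by rw [Nat.descFactorial_self])]
    ring
  · rw [if_neg hab]
    by_cases h0 : β - α = 0
    · rw [if_pos h0]
      have hle : β ≤ α := tsub_eq_zero_iff_le.mp h0
      obtain ⟨i, hi⟩ : ∃ i, β i ≠ α i := by
        by_contra hc
        push_neg at hc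
        exact hab (Finsupp.ext fun i => (hc i).symm)
      have hlt : β i < α i := lt_of_le_of_ne (Finsupp.le_def.mp hle i) hi
      have hmem : i ∈ α.support := Finsupp.mem_support_iff.mpr (by omega)
      have hz : (α.prod fun i k => ((β i).descFactorial k : ℂ)) = 0 :=
        Finset.prod_eq_zero hmem
          (by simp only []; rw [Nat.descFactorial_eq_zero_iff_lt.mpr hlt, Nat.cast_zero])
      rw [hz, mul_zero, mul_zero]
    · rw [if_neg h0]

lemma cc_Dhom (p q : MvP d) :
    constantCoeff (Dhom d p q) =
      ∑ α ∈ p.support ∪ q.support,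
        coeff α p * coeff α q * (α.prod fun _ m => (m.factorial : ℂ)) := by
  have expand : constantCoeff (Dhom d p q) =
      ∑ α ∈ p.support, ∑ β ∈ q.support,
        constantCoeff (Dhom d (monomial α (coeff α p)) (monomial β (coeff β q))) := by
    conv_lhs => rw [p.as_sum, q.as_sum]
    simp only [map_sum, LinearMap.sum_apply]
    rw [Finset.sum_comm]
  rw [expand]
  have step1 : ∀ α ∈ p.support, (∑ β ∈ q.support,
      constantCoeff (Dhom d (monomial α (coeff α p)) (monomial β (coeff β q)))) =
      coeff α p * coeff α q * (α.prod fun _ m => (m.factorial : ℂ)) := by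
    intro α hα
    have : ∀ β ∈ q.support,
        constantCoeff (Dhom d (monomial α (coeff α p)) (monomial β (coeff β q))) =
        if α = β then coeff α p * coeff β q * (α.prod fun _ m => (m.factorial : ℂ)) else 0 :=
      fun β _ => cc_Dhom_monomial α β _ _
    rw [Finset.sum_congr rfl this, Finset.sum_ite_eq]
    by_cases hq : α ∈ q.support
    · rw [if_pos hq]
    · rw [if_neg hq, MvPolynomial.notMem_support_iff.mp hq, mul_zero, zero_mul]
  rw [Finset.sum_congr rfl step1]
  apply Finset.sum_subset Finset.subset_union_left
  intro α _ hα
  rw [MvPolynomial.notMem_support_iff.mp hα, zero_mul, zero_mul]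

def compUA (U : Matrix (Fin d) (Fin d) ℂ) : MvP d →ₐ[ℂ] MvP d :=
  aeval (fun i => ∑ j, U i j • (X j : MvP d))

lemma compUA_X (U : Matrix (Fin d) (Fin d) ℂ) (i : Fin d) :
    compUA U (X i) = ∑ j, U i j • (X j : MvP d) := aeval_X _ i

lemma pderiv_compUA (U : Matrix (Fin d) (Fin d) ℂ) (j : Fin d) (g : MvP d) :
    pderiv j (compUA U g) = ∑ i, U i j • compUA U (pderiv i g) := by
  induction g using MvPolynomial.induction_on with
  | C a => simp [compUA]
  | add p q hp hq => simp [hp, hq, Finset.sum_add_distrib, smul_add]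
  | mul_X p k hp =>
    rw [map_mul, compUA_X, pderiv_mul, hp]
    have h1 : pderiv j (∑ l, U k l • (X l : MvP d)) = C (U k j) := by
      rw [map_sum]
      rw [Finset.sum_eq_single j (fun l _ hl => by
          rw [Derivation.map_smul, pderiv_X_of_ne hl, smul_zero]) (by simp)]
      rw [Derivation.map_smul, pderiv_X_self, smul_eq_C_mul, mul_one]
    rw [h1]
    have h2 : ∀ i, pderiv i (p * X k) = pderiv i p * X k + if k = i then p else 0 := by
      intro i
      rw [pderiv_mul]
      congr 1
      rcases eq_or_ne k i with rfl | hk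
      · rw [pderiv_X_self, if_pos rfl, mul_one]
      · rw [pderiv_X_of_ne hk, if_neg hk, mul_zero]
    simp only [h2, map_add, map_mul, compUA_X, smul_add, Finset.sum_add_distrib]
    congr 1
    · rw [Finset.sum_mul]
      exact Finset.sum_congr rfl fun i _ => (smul_mul_assoc _ _ _)
    · rw [Finset.sum_eq_single k (fun i _ hik => by rw [if_neg (Ne.symm hik), map_zero, smul_zero])
        (by simp)]
      rw [if_pos rfl, smul_eq_C_mul, mul_comm]

lemma Dhom_compUA_X (U : Matrix (Fin d) (Fin d) ℂ) (j : Fin d) (g : MvP d) :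
    Dhom d (compUA U.transpose (X j)) g = ∑ i, U i j • pderiv i g := by
  rw [compUA_X, map_sum, LinearMap.sum_apply]
  refine Finset.sum_congr rfl fun i _ => ?_
  rw [map_smul, Dhom_X, LinearMap.smul_apply, Matrix.transpose_apply]
  rfl

lemma Dhom_compUA (U : Matrix (Fin d) (Fin d) ℂ) (p : MvP d) :
    ∀ g, Dhom d p (compUA U g) = compUA U (Dhom d (compUA U.transpose p) g) := by
  induction p using MvPolynomial.induction_on with
  | C a =>
    intro g
    have h1 : Dhom d (C a : MvP d) = a • (1 : Module.End ℂ (MvP d)) := by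
      rw [← algebraMap_eq, AlgHom.commutes, Module.algebraMap_end_eq_smul_id]; rfl
    have h2 : compUA U.transpose (C a : MvP d) = C a := by
      rw [← algebraMap_eq, AlgHom.commutes, algebraMap_eq]
    rw [h1, h2, h1, LinearMap.smul_apply, LinearMap.smul_apply, Module.End.one_apply,
      Module.End.one_apply, map_smul]
  | add p q hp hq =>
    intro g
    rw [map_add, map_add, map_add, LinearMap.add_apply, LinearMap.add_apply, hp g, hq g, map_add]
  | mul_X p j hp =>
    intro g
    rw [map_mul, map_mul, map_mul, Module.End.mul_apply, Module.End.mul_apply, Dhom_X]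
    have hXj : (pdE d j) (compUA U g) = ∑ i, U i j • compUA U (pderiv i g) :=
      pderiv_compUA U j g
    rw [hXj, map_sum]
    have : ∀ i ∈ Finset.univ, Dhom d p (U i j • compUA U (pderiv i g))
        = U i j • compUA U (Dhom d (compUA U.transpose p) (pderiv i g)) := by
      intro i _
      rw [map_smul, hp (pderiv i g)]
    rw [Finset.sum_congr rfl this, Dhom_compUA_X, map_sum, map_sum]
    refine Finset.sum_congr rfl fun i _ => ?_
    rw [map_smul, map_smul]

lemma compUA_comp (V W : Matrix (Fin d) (Fin d) ℂ) (h : MvP d) :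
    compUA V (compUA W h) = compUA (W * V) h := by
  have : (compUA V).comp (compUA W) = compUA (W * V) := by
    apply algHom_ext
    intro i
    simp only [AlgHom.comp_apply, compUA_X, map_sum, map_smul, Matrix.mul_apply,
      Finset.sum_smul, smul_smul, Finset.smul_sum]
    rw [Finset.sum_comm]
  exact AlgHom.congr_fun this h

lemma compUA_one (h : MvP d) : compUA (1 : Matrix (Fin d) (Fin d) ℂ) h = h := by
  have : compUA (1 : Matrix (Fin d) (Fin d) ℂ) = AlgHom.id ℂ (MvP d) := by
    apply algHom_ext
    intro i
    simp [compUA_X, Matrix.one_apply, ite_smul]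
  rw [this]; rfl

lemma cc_compUA (U : Matrix (Fin d) (Fin d) ℂ) (h : MvP d) :
    constantCoeff (compUA U h) = constantCoeff h := by
  have : (constantCoeff : MvP d →+* ℂ).comp (compUA U : MvP d →+* MvP d)
      = constantCoeff := by
    apply ringHom_ext
    · intro a
      simp [compUA]
    · intro i
      simp [compUA_X, smul_eq_C_mul]
  exact RingHom.congr_fun this h

lemma map_conj_compUA (U : Matrix (Fin d) (Fin d) ℂ) (f : MvP d) :
    map (starRingEnd ℂ) (compUA U f)
      = compUA (U.map (starRingEnd ℂ)) (map (starRingEnd ℂ) f) := by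
  have : (map (starRingEnd ℂ)).comp (compUA U : MvP d →+* MvP d)
      = ((compUA (U.map (starRingEnd ℂ)) : MvP d →+* MvP d)).comp (map (starRingEnd ℂ)) := by
    apply ringHom_ext
    · intro a
      simp [compUA]
    · intro i
      simp [compUA_X, smul_eq_C_mul, Matrix.map_apply]
  exact RingHom.congr_fun this f

lemma unitary_conj_mul_transpose (U : Matrix (Fin d) (Fin d) ℂ)
    (hU : U ∈ Matrix.unitaryGroup (Fin d) ℂ) :
    U.map (starRingEnd ℂ) * U.transpose = 1 := by
  have h : U * star U = 1 := Matrix.mem_unitaryGroup_iff.mp hU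
  have h2 := congrArg Matrix.transpose h
  rw [Matrix.transpose_mul, Matrix.transpose_one] at h2
  rw [← h2]
  congr 1

lemma fischer_eq (f g : MvP d) :
    fischer f g = constantCoeff (Dhom d (map (starRingEnd ℂ) f) g) := by
  rw [cc_Dhom, fischer, support_map_of_injective f (RingHom.injective _)]
  refine Finset.sum_congr rfl fun α _ => ?_
  rw [coeff_map]

end FischerProof

/-- The Fischer inner product of homogeneous polynomials of equal degree
is invariant under a unitary change of variables: `⟨f∘U, g∘U⟩ = ⟨f, g⟩`. -/
theorem fischer_compU (d n : ℕ) (f g : MvPolynomial (Fin d) ℂ)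
    (hf : f.IsHomogeneous n) (hg : g.IsHomogeneous n)
    (U : Matrix (Fin d) (Fin d) ℂ) (hU : U ∈ Matrix.unitaryGroup (Fin d) ℂ) :
    fischer (compU U f) (compU U g) = fischer f g := by
  have e1 : compU U f = compUA U f := rfl
  have e2 : compU U g = compUA U g := rfl
  rw [e1, e2, fischer_eq, fischer_eq, map_conj_compUA, Dhom_compUA, compUA_comp,
    unitary_conj_mul_transpose U hU, compUA_one, cc_compUA]
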